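/- Let Γ be a four-letter alphabet with distinct symbols a, ◁, ▷, #, let k ≥ 1, and let A be an NFA over Γ with a finite state set. For states q₁, q₂, let L_{q₁q₂} ⊆ ℕ^k be the set of tuples (i₁, …, i_k) such that q₂ ∈ evalFrom({q₁}, ◁ a^{i₁} # a^{i₂} # ⋯ # a^{i_k} ▷). Then L_{q₁q₂} is a finite union of sets of the form S₁ × ⋯ × S_k, where each S_j ⊆ ℕ is eventually periodic: there exist N ∈ ℕ and p > 0 such that for all i ≥ N, i ∈ S_j if and only if i + p ∈ S_j. -/

import Mathlib

/-- The word `◁ a^{i₁} # a^{i₂} # ⋯ # a^{i_k} ▷` encoding the tuple `x : Fin k → ℕ`.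
Here `lt`, `rt`, `sh` stand for the symbols `◁`, `▷`, `#`. -/
def blockWord {Γ : Type*} (a lt rt sh : Γ) {k : ℕ} (x : Fin k → ℕ) : List Γ :=
  [lt] ++ List.intercalate [sh] (List.ofFn fun j => List.replicate (x j) a) ++ [rt]

/-- A set `S ⊆ ℕ` is eventually periodic. -/
def EventuallyPeriodic (S : Set ℕ) : Prop :=
  ∃ (N p : ℕ), 0 < p ∧ ∀ i ≥ N, (i ∈ S ↔ i + p ∈ S)

namespace StmtAux
variable {Γ σ : Type*}

/-- The middle part of the block word, defined by recursion on the list of block lengths. -/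
def midW (a sh : Γ) : List ℕ → List Γ
  | [] => []
  | [i] => List.replicate i a
  | i :: j :: rest => List.replicate i a ++ sh :: midW a sh (j :: rest)

theorem intercalate_eq (a sh : Γ) : ∀ l : List ℕ,
    List.intercalate [sh] (l.map (fun i => List.replicate i a)) = midW a sh l
  | [] => by simp [midW, List.intercalate]
  | [i] => by simp [midW, List.intercalate]
  | i :: j :: rest => by
    have ih := intercalate_eq a sh (j :: rest)
    simp only [List.map_cons, List.intercalate, List.intersperse] at ih ⊢
    simp [midW, ← ih]

theorem midW_cons (a sh : Γ) (i : ℕ) (l : List ℕ) (hl : l ≠ []) :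
    midW a sh (i :: l) = List.replicate i a ++ sh :: midW a sh l := by
  cases l with
  | nil => simp at hl
  | cons j rest => rfl

theorem evalFrom_append (M : NFA Γ σ) (S : Set σ) (u v : List Γ) :
    M.evalFrom S (u ++ v) = M.evalFrom (M.evalFrom S u) v := by
  simp [NFA.evalFrom, List.foldl_append]

theorem evalFrom_cons (M : NFA Γ σ) (S : Set σ) (b : Γ) (w : List Γ) :
    M.evalFrom S (b :: w) = M.evalFrom (M.stepSet S b) w := rfl

theorem stepSet_singleton (M : NFA Γ σ) (p : σ) (b : Γ) :
    M.stepSet {p} b = M.step p b := by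
  simp [NFA.stepSet]

theorem mem_evalFrom_iff (M : NFA Γ σ) (q : σ) (S : Set σ) (w : List Γ) :
    q ∈ M.evalFrom S w ↔ ∃ p ∈ S, q ∈ M.evalFrom {p} w := by
  induction w generalizing S with
  | nil => simp [NFA.evalFrom_nil]
  | cons b w ih =>
    rw [evalFrom_cons, ih]
    constructor
    · rintro ⟨r, hr, hq⟩
      rw [NFA.mem_stepSet] at hr
      obtain ⟨p, hp, hr⟩ := hr
      refine ⟨p, hp, ?_⟩
      rw [evalFrom_cons, ih]
      exact ⟨r, by rwa [stepSet_singleton], hq⟩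
    · rintro ⟨p, hp, hq⟩
      rw [evalFrom_cons, ih] at hq
      obtain ⟨r, hr, hq⟩ := hq
      rw [stepSet_singleton] at hr
      exact ⟨r, NFA.mem_stepSet.2 ⟨p, hp, hr⟩, hq⟩

theorem evalFrom_replicate (M : NFA Γ σ) (b : Γ) (i : ℕ) (S : Set σ) :
    M.evalFrom S (List.replicate i b) = (fun T => M.stepSet T b)^[i] S := by
  induction i generalizing S with
  | zero => simp [NFA.evalFrom_nil]
  | succ n ih =>
    rw [List.replicate_succ, Function.iterate_succ_apply]
    exact ih _

theorem ep_block (M : NFA Γ σ) (a : Γ) [Finite σ] (p q : σ) :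
    EventuallyPeriodic {i | q ∈ M.evalFrom {p} (List.replicate i a)} := by
  set g : Set σ → Set σ := fun T => M.stepSet T a with hg
  obtain ⟨m, n, hmn, he⟩ :=
    Finite.exists_ne_map_eq_of_infinite (fun i : ℕ => g^[i] ({p} : Set σ))
  rcases hmn.lt_or_gt with h | h
  · refine ⟨m, n - m, by omega, fun i hi => ?_⟩
    obtain ⟨d, rfl⟩ := Nat.exists_eq_add_of_le hi
    have : g^[m + d + (n - m)] ({p} : Set σ) = g^[m + d] {p} := by
      have h1 : m + d + (n - m) = d + n := by omega
      have h2 : m + d = d + m := by omega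
      rw [h1, h2, Function.iterate_add_apply, Function.iterate_add_apply, he]
    simp only [Set.mem_setOf_eq, evalFrom_replicate, ← hg, this]
  · refine ⟨n, m - n, by omega, fun i hi => ?_⟩
    obtain ⟨d, rfl⟩ := Nat.exists_eq_add_of_le hi
    have : g^[n + d + (m - n)] ({p} : Set σ) = g^[n + d] {p} := by
      have h1 : n + d + (m - n) = d + m := by omega
      have h2 : n + d = d + n := by omega
      rw [h1, h2, Function.iterate_add_apply, Function.iterate_add_apply, he]
    simp only [Set.mem_setOf_eq, evalFrom_replicate, ← hg, this]

theorem ep_empty : EventuallyPeriodic (∅ : Set ℕ) :=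
  ⟨0, 1, one_pos, fun _ _ => by simp⟩

theorem mid_iff (a sh : Γ) (M : NFA Γ σ) (m : ℕ) (x : Fin (m + 1) → ℕ) (p q : σ) :
    q ∈ M.evalFrom {p} (midW a sh (List.ofFn x)) ↔
      ∃ s : Fin (m + 1) → σ × σ,
        (s 0).1 = p ∧ (s (Fin.last m)).2 = q ∧
        (∀ j : Fin m, (s j.succ).1 ∈ M.step (s j.castSucc).2 sh) ∧
        (∀ j, (s j).2 ∈ M.evalFrom {(s j).1} (List.replicate (x j) a)) := by
  induction m generalizing p q with
  | zero =>
    simp only [List.ofFn_succ, List.ofFn_zero]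
    constructor
    · intro h
      refine ⟨fun _ => (p, q), rfl, rfl, fun j => j.elim0, fun j => ?_⟩
      rw [Fin.fin_one_eq_zero j]
      exact h
    · rintro ⟨s, h1, h2, _, h4⟩
      have := h4 0
      rw [h1] at this
      rw [show (0 : Fin 1) = Fin.last 0 from rfl, h2] at this
      exact this
  | succ m ih =>
    have hofn : List.ofFn x = x 0 :: List.ofFn (fun j : Fin (m + 1) => x j.succ) :=
      List.ofFn_succ (f := x)
    rw [hofn, midW_cons a sh _ _ (by simp), evalFrom_append, evalFrom_cons,
      mem_evalFrom_iff]
    constructor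
    · rintro ⟨u, hu, hq⟩
      rw [NFA.mem_stepSet] at hu
      obtain ⟨t, ht, hstep⟩ := hu
      obtain ⟨s', h1', h2', h3', h4'⟩ := (ih _ u q).mp hq
      refine ⟨Fin.cons (p, t) s', by simp, ?_, ?_, ?_⟩
      · rw [← Fin.succ_last, Fin.cons_succ]
        exact h2'
      · intro j
        refine Fin.cases ?_ (fun j' => ?_) j
        · rw [Fin.cons_succ, Fin.castSucc_zero, Fin.cons_zero, h1']
          exact hstep
        · rw [← Fin.succ_castSucc, Fin.cons_succ, Fin.cons_succ]
          exact h3' j'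
      · intro j
        refine Fin.cases ?_ (fun j' => ?_) j
        · simpa using ht
        · rw [Fin.cons_succ]
          exact h4' j'
    · rintro ⟨s, h1, h2, h3, h4⟩
      have ht : (s 0).2 ∈ M.evalFrom {p} (List.replicate (x 0) a) := by
        rw [← h1]; exact h4 0
      refine ⟨(s (Fin.succ 0)).1, NFA.mem_stepSet.2 ⟨(s 0).2, ht, ?_⟩, ?_⟩
      · have := h3 0
        rwa [Fin.castSucc_zero] at this
      · refine (ih _ _ q).mpr ⟨fun j => s j.succ, rfl, ?_, ?_, fun j => h4 j.succ⟩
        · show (s (Fin.last m).succ).2 = q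
          rw [Fin.succ_last]
          exact h2
        · intro j
          have := h3 j.succ
          rwa [← Fin.succ_castSucc] at this

end StmtAux

theorem stmt12 {Γ σ : Type*} [Fintype σ] (a lt rt sh : Γ)
    (h₁ : a ≠ lt) (h₂ : a ≠ rt) (h₃ : a ≠ sh) (h₄ : lt ≠ rt) (h₅ : lt ≠ sh) (h₆ : rt ≠ sh)
    (k : ℕ) (hk : 1 ≤ k) (M : NFA Γ σ) (q₁ q₂ : σ) :
    ∃ (t : ℕ) (f : Fin t → Fin k → Set ℕ),
      (∀ s : Fin t, ∀ j : Fin k, EventuallyPeriodic (f s j)) ∧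
      {x : Fin k → ℕ | q₂ ∈ M.evalFrom {q₁} (blockWord a lt rt sh x)} =
        {x : Fin k → ℕ | ∃ s : Fin t, ∀ j : Fin k, x j ∈ f s j} := by
  classical
  obtain ⟨m, rfl⟩ : ∃ m, k = m + 1 := ⟨k - 1, by omega⟩
  -- the chain condition on a sequence of state pairs
  set Cond : (Fin (m + 1) → σ × σ) → Prop := fun s =>
    (s 0).1 ∈ M.step q₁ lt ∧ q₂ ∈ M.step (s (Fin.last m)).2 rt ∧
      (∀ j : Fin m, (s j.succ).1 ∈ M.step (s j.castSucc).2 sh) with hCond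
  -- the key characterization of membership
  have key : ∀ x : Fin (m + 1) → ℕ,
      q₂ ∈ M.evalFrom {q₁} (blockWord a lt rt sh x) ↔
        ∃ S : Fin (m + 1) → σ × σ, Cond S ∧
          ∀ j, (S j).2 ∈ M.evalFrom {(S j).1} (List.replicate (x j) a) := by
    intro x
    have hw : blockWord a lt rt sh x =
        (lt :: StmtAux.midW a sh (List.ofFn x)) ++ [rt] := by
      simp only [blockWord]
      rw [show (List.ofFn fun j => List.replicate (x j) a) =
          (List.ofFn x).map (fun i => List.replicate i a) by
        rw [List.map_ofFn]; rfl]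
      rw [StmtAux.intercalate_eq]
      simp
    rw [hw, NFA.evalFrom_append, NFA.evalFrom_singleton, NFA.mem_stepSet]
    constructor
    · rintro ⟨t, ht, hrt⟩
      rw [StmtAux.evalFrom_cons, StmtAux.stepSet_singleton,
        StmtAux.mem_evalFrom_iff] at ht
      obtain ⟨p, hp, hmid⟩ := ht
      obtain ⟨S, hS1, hS2, hS3, hS4⟩ := (StmtAux.mid_iff a sh M m x p t).mp hmid
      refine ⟨S, ⟨by rwa [hS1], by rwa [hS2], hS3⟩, hS4⟩
    · rintro ⟨S, ⟨hlt, hrt, hsh⟩, hblk⟩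
      refine ⟨(S (Fin.last m)).2, ?_, hrt⟩
      rw [StmtAux.evalFrom_cons, StmtAux.stepSet_singleton,
        StmtAux.mem_evalFrom_iff]
      exact ⟨(S 0).1, hlt,
        (StmtAux.mid_iff a sh M m x _ _).mpr ⟨S, rfl, rfl, hsh, hblk⟩⟩
  -- index the union by all state-pair sequences
  let e := (Fintype.equivFin (Fin (m + 1) → σ × σ)).symm
  refine ⟨Fintype.card (Fin (m + 1) → σ × σ), fun s j =>
    if Cond (e s) then
      {i | (e s j).2 ∈ M.evalFrom {(e s j).1} (List.replicate i a)}
    else ∅, ?_, ?_⟩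
  · intro s j
    dsimp only
    split
    · exact StmtAux.ep_block M a _ _
    · exact StmtAux.ep_empty
  · ext x
    simp only [Set.mem_setOf_eq, key]
    constructor
    · rintro ⟨S, hC, hblk⟩
      refine ⟨e.symm S, fun j => ?_⟩
      have he : e (e.symm S) = S := e.apply_symm_apply S
      rw [he, if_pos hC]
      exact hblk j
    · rintro ⟨s, hs⟩
      by_cases hc : Cond (e s)
      · refine ⟨e s, hc, fun j => ?_⟩
        have := hs j
        rwa [if_pos hc] at this
      · have := hs 0
        rw [if_neg hc] at this
        exact absurd this (Set.notMem_empty _)
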